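/- For any complex numbers a, b, c, x, y with a, b, c pairwise distinct, the sum of absolute values |(x-a)(y-a)|/(|b-a||c-a|) + |(x-b)(y-b)|/(|a-b||c-b|) + |(x-c)(y-c)|/(|a-c||b-c|) is at least 1. -/

import Mathlib

theorem stmt_1 (a b c x y : ℂ) (hab : a ≠ b) (hac : a ≠ c) (hbc : b ≠ c) :
    ‖((x - a) * (y - a))‖ / (‖(b - a)‖ * ‖(c - a)‖) +
    ‖((x - b) * (y - b))‖ / (‖(a - b)‖ * ‖(c - b)‖) +
    ‖((x - c) * (y - c))‖ / (‖(a - c)‖ * ‖(b - c)‖) ≥ 1 := by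
  have hba : b - a ≠ 0 := sub_ne_zero.2 hab.symm
  have hca : c - a ≠ 0 := sub_ne_zero.2 hac.symm
  have hab' : a - b ≠ 0 := sub_ne_zero.2 hab
  have hcb : c - b ≠ 0 := sub_ne_zero.2 hbc.symm
  have hac' : a - c ≠ 0 := sub_ne_zero.2 hac
  have hbc' : b - c ≠ 0 := sub_ne_zero.2 hbc
  have key : (x - a) * (y - a) / ((b - a) * (c - a)) +
      (x - b) * (y - b) / ((a - b) * (c - b)) +
      (x - c) * (y - c) / ((a - c) * (b - c)) = 1 := by
    field_simp
    ring
  calc (1 : ℝ) = ‖((x - a) * (y - a) / ((b - a) * (c - a)) +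
      (x - b) * (y - b) / ((a - b) * (c - b)) +
      (x - c) * (y - c) / ((a - c) * (b - c)))‖ := by rw [key]; simp
    _ ≤ _ := by
        refine (norm_add_le _ _).trans ?_
        gcongr
        · exact (norm_add_le _ _).trans (by simp [norm_div, norm_mul])
        · simp [norm_div, norm_mul]
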